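/- Fix t ∈ [0,1], γ ∈ [0,1). Let p, q : S×A → P(S) be measurable families of probability measures and let Γ̃ be a jointly measurable family such that Γ̃(·|s,a) is a coupling of p(·|s,a) and q(·|s,a) for each (s,a). Define the measure on S×S given by Θ(·|s,a) := (1−γ)·(the pushforward of P_t(·|s,a) under the diagonal map x ↦ (x,x)) + γ·∫ Γ̃(·|s',π(s')) P(ds'|s,a). Then for every (s,a): (i) Θ(·|s,a) is a coupling of (B_t^π p)(·|s,a) and (B_t^π q)(·|s,a); and (ii) for every k ∈ [1,∞), ∫‖x−y‖^k dΘ(x,y|s,a) = γ·∫(∫‖x−y‖^k dΓ̃(x,y|s',π(s'))) P(ds'|s,a). -/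

import Mathlib

open MeasureTheory
open scoped ENNReal NNReal

noncomputable section

/-- The state space `S = ℝ^d`. -/
abbrev St (d : ℕ) := EuclideanSpace ℝ (Fin d)

/-- `(P^π m)(·|s,a) := ∫ m(·|s',π(s')) P(ds'|s,a)`. -/
def Ppi {d : ℕ} {𝒜 : Type*} [MeasurableSpace 𝒜]
    (P : St d × 𝒜 → Measure (St d)) (π : St d → 𝒜)
    (m : St d × 𝒜 → Measure (St d)) : St d × 𝒜 → Measure (St d) :=
  fun sa => (P sa).bind fun s' => m (s', π s')

/-- `P_t(·|s,a) := ∫ p_{t|1}(·|x₁) P(dx₁|s,a)` for a conditional path kernel `p_{t|1}`. -/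
def Pt {d : ℕ} {𝒜 : Type*} [MeasurableSpace 𝒜]
    (P : St d × 𝒜 → Measure (St d)) (κ : St d → Measure (St d)) :
    St d × 𝒜 → Measure (St d) :=
  fun sa => (P sa).bind κ

/-- The probability-path Bellman operator
`(B_t^π m)(·|s,a) := (1−γ) P_t(·|s,a) + γ (P^π m)(·|s,a)`. -/
def Bpath {d : ℕ} {𝒜 : Type*} [MeasurableSpace 𝒜] (γ : ℝ)
    (P : St d × 𝒜 → Measure (St d)) (π : St d → 𝒜) (κ : St d → Measure (St d))
    (m : St d × 𝒜 → Measure (St d)) : St d × 𝒜 → Measure (St d) :=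
  fun sa => ENNReal.ofReal (1 - γ) • Pt P κ sa + ENNReal.ofReal γ • Ppi P π m sa

/-- `Γ` is a coupling of `μ` and `ν`: a measure on the product whose marginals are `μ`, `ν`. -/
def IsCoupling {d : ℕ} (Γ : Measure (St d × St d)) (μ ν : Measure (St d)) : Prop :=
  Γ.map Prod.fst = μ ∧ Γ.map Prod.snd = ν

/-- The `k`-Wasserstein distance for the Euclidean distance on `ℝ^d`. -/
def Wk {d : ℕ} (k : ℝ) (μ ν : Measure (St d)) : ℝ≥0∞ :=
  ⨅ (Γ : Measure (St d × St d)) (_ : IsProbabilityMeasure Γ) (_ : IsCoupling Γ μ ν),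
    (∫⁻ p, edist p.1 p.2 ^ k ∂Γ) ^ (1 / k)

lemma map_bind_aux {α β γ : Type*} [MeasurableSpace α] [MeasurableSpace β] [MeasurableSpace γ]
    (m : Measure α) {f : α → Measure β} (hf : Measurable f) {g : β → γ} (hg : Measurable g) :
    (m.bind f).map g = m.bind (fun a => (f a).map g) := by
  ext s hs
  rw [Measure.map_apply hg hs, Measure.bind_apply (hg hs) hf.aemeasurable,
    Measure.bind_apply hs (show Measurable fun a => (f a).map g from (Measure.measurable_map g hg).comp hf).aemeasurable]
  simp_rw [Measure.map_apply hg hs]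

/-- The explicit coupling `Θ` built from the diagonal lift of `P_t` and the
bootstrapped couplings is a coupling of the Bellman updates, and its `k`-transport cost is `γ`
times the averaged transport cost of the given couplings. -/
theorem explicit_coupling_of_bellman_updates {d : ℕ} {𝒜 : Type*} [MeasurableSpace 𝒜]
    (t : ℝ) (ht : t ∈ Set.Icc (0 : ℝ) 1)
    (γ : ℝ) (hγ0 : 0 ≤ γ) (hγ1 : γ < 1)
    (P : St d × 𝒜 → Measure (St d)) (hPmeas : Measurable P)
    (hPprob : ∀ sa, IsProbabilityMeasure (P sa))
    (π : St d → 𝒜) (hπ : Measurable π)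
    (κ : St d → Measure (St d)) (hκmeas : Measurable κ)
    (hκprob : ∀ x, IsProbabilityMeasure (κ x))
    (p q : St d × 𝒜 → Measure (St d))
    (hpmeas : Measurable p) (hqmeas : Measurable q)
    (hpprob : ∀ sa, IsProbabilityMeasure (p sa)) (hqprob : ∀ sa, IsProbabilityMeasure (q sa))
    -- a jointly measurable family of couplings
    (Γ : St d × 𝒜 → Measure (St d × St d)) (hΓmeas : Measurable Γ)
    (hΓprob : ∀ sa, IsProbabilityMeasure (Γ sa))
    (hΓcpl : ∀ sa, IsCoupling (Γ sa) (p sa) (q sa))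
    -- the lifted coupling Θ
    (Θ : St d × 𝒜 → Measure (St d × St d))
    (hΘ : ∀ sa : St d × 𝒜, Θ sa =
      ENNReal.ofReal (1 - γ) • (Pt P κ sa).map (fun x => (x, x)) +
        ENNReal.ofReal γ • (P sa).bind (fun s' => Γ (s', π s'))) :
    ∀ sa : St d × 𝒜,
      IsProbabilityMeasure (Θ sa) ∧
      IsCoupling (Θ sa) (Bpath γ P π κ p sa) (Bpath γ P π κ q sa) ∧
      ∀ k : ℝ, 1 ≤ k →
        (∫⁻ pr, edist pr.1 pr.2 ^ k ∂Θ sa) =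
          ENNReal.ofReal γ *
            ∫⁻ s', (∫⁻ pr, edist pr.1 pr.2 ^ k ∂Γ (s', π s')) ∂P sa := by
  intro sa
  have hdiag : Measurable (fun x : St d => (x, x)) := measurable_id.prodMk measurable_id
  have hkern : Measurable (fun s' : St d => Γ (s', π s')) :=
    hΓmeas.comp (measurable_id.prodMk hπ)
  have hpk : Measurable (fun s' : St d => p (s', π s')) :=
    hpmeas.comp (measurable_id.prodMk hπ)
  have hqk : Measurable (fun s' : St d => q (s', π s')) :=
    hqmeas.comp (measurable_id.prodMk hπ)
  have hsum : ENNReal.ofReal (1 - γ) + ENNReal.ofReal γ = 1 := by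
    rw [← ENNReal.ofReal_add (by linarith) hγ0]; norm_num
  have hPt_univ : (Pt P κ sa) Set.univ = 1 := by
    rw [Pt, Measure.bind_apply MeasurableSet.univ hκmeas.aemeasurable]
    simp [measure_univ]
  have hbind_univ : ((P sa).bind (fun s' => Γ (s', π s'))) Set.univ = 1 := by
    rw [Measure.bind_apply MeasurableSet.univ hkern.aemeasurable]
    simp [measure_univ]
  refine ⟨?_, ⟨?_, ?_⟩, ?_⟩
  · constructor
    rw [hΘ sa]
    simp only [Measure.add_apply, Measure.smul_apply, smul_eq_mul]
    rw [Measure.map_apply hdiag MeasurableSet.univ, Set.preimage_univ, hPt_univ, hbind_univ,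
      mul_one, mul_one, hsum]
  · rw [hΘ sa, Measure.map_add _ _ measurable_fst, Measure.map_smul, Measure.map_smul,
      Measure.map_map measurable_fst hdiag, map_bind_aux _ hkern measurable_fst]
    have h1 : (Prod.fst ∘ fun x : St d => (x, x)) = id := rfl
    rw [h1, Measure.map_id]
    have h2 : (fun s' : St d => (Γ (s', π s')).map Prod.fst) = fun s' => p (s', π s') := by
      funext s'; exact (hΓcpl (s', π s')).1
    rw [h2]; rfl
  · rw [hΘ sa, Measure.map_add _ _ measurable_snd, Measure.map_smul, Measure.map_smul,
      Measure.map_map measurable_snd hdiag, map_bind_aux _ hkern measurable_snd]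
    have h1 : (Prod.snd ∘ fun x : St d => (x, x)) = id := rfl
    rw [h1, Measure.map_id]
    have h2 : (fun s' : St d => (Γ (s', π s')).map Prod.snd) = fun s' => q (s', π s') := by
      funext s'; exact (hΓcpl (s', π s')).2
    rw [h2]; rfl
  · intro k hk
    have hf : Measurable (fun pr : St d × St d => edist pr.1 pr.2 ^ k) :=
      (measurable_fst.edist measurable_snd).pow_const k
    rw [hΘ sa]
    rw [lintegral_add_measure, lintegral_smul_measure, lintegral_smul_measure,
      lintegral_map hf hdiag, Measure.lintegral_bind hkern.aemeasurable hf.aemeasurable]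
    have hzero : ∀ x : St d, edist ((x, x) : St d × St d).1 (x, x).2 ^ k = 0 := by
      intro x
      simp only [edist_self]
      exact ENNReal.zero_rpow_of_pos (by linarith)
    simp only [hzero, lintegral_zero, mul_zero, zero_add, smul_zero, smul_eq_mul]
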